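/- arXiv:2510.23291 — 2 statements merged into one kernel-verified Lean document; each statement's English description precedes it below -/
import Mathlib

section
/- Let d be admissible for (a,b). Then Sel^φ_{S_d}(−d·a, d²·b) = Sel^φ_{S_d}(a,b) as subsets of ℚˣ; that is, the truncated φ-Selmer sets of E_{a,b} and of its quadratic twist by −d coincide. -/
open scoped Classical

/-- The local φ-descent set `L_{a,b}(K)` of the 2-isogeny
`φ : E_{a,b} → E_{-2a, a²-4b}`, viewed as a predicate on `K`. -/
def LocDescent (a b : ℤ) {K : Type*} [Field K] (c : K) : Prop :=
  c ≠ 0 ∧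
    ((∃ u : K, c = u ^ 2) ∨
     (∃ u : K, u ≠ 0 ∧ c * u ^ 2 = (a : K) ^ 2 - 4 * (b : K)) ∨
     (∃ x y u : K, x ≠ 0 ∧ u ≠ 0 ∧
        y ^ 2 = x * (x ^ 2 - 2 * (a : K) * x + ((a : K) ^ 2 - 4 * (b : K))) ∧
        c * u ^ 2 = x))

/-- The φ-Selmer set `Sel^φ(a,b) ⊆ ℚˣ`. -/
def SelSet (a b : ℤ) : Set ℚ :=
  { c | LocDescent a b (c : ℝ) ∧
      ∀ (p : ℕ) [Fact p.Prime], LocDescent a b (c : ℚ_[p]) }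

/-- The truncated φ-Selmer set `Sel^φ_{S_d}(a,b)`, where `S_d` consists of `∞`
together with the primes dividing `d`. -/
def SelSetTrunc (a b d : ℤ) : Set ℚ :=
  { c | c ≠ 0 ∧
      ∀ (p : ℕ) [Fact p.Prime], ¬ (p : ℤ) ∣ d → LocDescent a b (c : ℚ_[p]) }

/-- `d` is admissible for `(a, b)`: a positive squarefree product of an odd number of
distinct primes, each `≡ 7 (mod 8)`, prime to `b(a²-4b)`, with `-q` a square in `ℚ_p`
for every prime `p ∣ 2b(a²-4b)`. -/
def Admissible (a b d : ℤ) : Prop :=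
  0 < d ∧ Squarefree d ∧ Odd d.natAbs.primeFactors.card ∧
    ∀ q ∈ d.natAbs.primeFactors,
      q % 8 = 7 ∧ ¬ (q : ℤ) ∣ b * (a ^ 2 - 4 * b) ∧
        ∀ (p : ℕ) [Fact p.Prime], (p : ℤ) ∣ 2 * b * (a ^ 2 - 4 * b) →
          ∃ u : ℚ_[p], u ^ 2 = ((-q : ℤ) : ℚ_[p])

/-- `λ_q(c)`: the parity of the `q`-adic valuation of `c`. -/
noncomputable def lamF (q : ℕ) (c : ℚ) : ZMod 2 := ((padicValRat q c : ℤ) : ZMod 2)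

/-- `γ_q(c)`: `0` if the unit part `c · q^{-v_q(c)}` is a square in `ℚ_qˣ`, `1` otherwise. -/
noncomputable def gamF (q : ℕ) [Fact q.Prime] (c : ℚ) : ZMod 2 :=
  if ∃ u : ℚ_[q], u ^ 2 = ((c * (q : ℚ) ^ (-(padicValRat q c)) : ℚ) : ℚ_[q]) then 0 else 1

/-- `ε_∞(c)`: `0` if `c > 0`, `1` otherwise. -/
def epsF (c : ℚ) : ZMod 2 := if 0 < c then 0 else 1

/-- `q ∈ T_d^-`: the Legendre symbol `(d/q | q)` equals `+1` iff the roots of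
`X² - 2aX + (a²-4b)` are squares in `ℚ_qˣ`. -/
def InTdMinus (a b d : ℤ) (q : ℕ) [Fact q.Prime] : Prop :=
  (legendreSym q (d / q) = 1) ↔
    ∀ β : ℚ_[q],
      β ^ 2 - 2 * (a : ℚ_[q]) * β + ((a : ℚ_[q]) ^ 2 - 4 * (b : ℚ_[q])) = 0 →
      ∃ u : ℚ_[q], u ^ 2 = β

/-- The matrix `A_d` over `𝔽₂`, indexed by the primes dividing `d`. -/
noncomputable def matA (a b d : ℤ) :
    Matrix {q : ℕ // q ∈ d.natAbs.primeFactors} {q : ℕ // q ∈ d.natAbs.primeFactors}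
      (ZMod 2) :=
  Matrix.of fun p q =>
    haveI : Fact (p.1).Prime := ⟨Nat.prime_of_mem_primeFactors p.2⟩
    if p = q then (if InTdMinus a b d p.1 then 1 else 0)
    else if legendreSym p.1 (q.1 : ℤ) = 1 then 0 else 1

/-- The entrywise complement `Ā_d = A_d + J`. -/
noncomputable def matABar (a b d : ℤ) :
    Matrix {q : ℕ // q ∈ d.natAbs.primeFactors} {q : ℕ // q ∈ d.natAbs.primeFactors}
      (ZMod 2) :=
  Matrix.of fun p q => matA a b d p q + 1

/-- `Ã_d`: `A_d` with an all-ones column prepended. -/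
noncomputable def matATilde (a b d : ℤ) :
    Matrix {q : ℕ // q ∈ d.natAbs.primeFactors}
      (Unit ⊕ {q : ℕ // q ∈ d.natAbs.primeFactors}) (ZMod 2) :=
  Matrix.of fun p => Sum.elim (fun _ => 1) (fun q => matA a b d p q)

/-- `Â_d`: an all-ones row on top of `Ā_d`. -/
noncomputable def matAHat (a b d : ℤ) :
    Matrix (Unit ⊕ {q : ℕ // q ∈ d.natAbs.primeFactors})
      {q : ℕ // q ∈ d.natAbs.primeFactors} (ZMod 2) :=
  Matrix.of (Sum.elim (fun _ _ => 1) (fun p q => matA a b d p q + 1))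

/-- `η_φ(d) = 1`. -/
def EtaOne (a b d : ℤ) : Prop :=
  ∃ c ∈ SelSetTrunc a b d,
    epsF c + ∑ q ∈ d.natAbs.primeFactors, lamF q c = 1

/-- The subgroup of squares in `ℚˣ`. -/
def QSq : Subgroup ℚˣ := (powMonoidHom 2 : ℚˣ →* ℚˣ).range

/-- The φ-Selmer group `Sel^φ(E_{a,b}/ℚ)`: the image of `Sel^φ(a,b)` in `ℚˣ/(ℚˣ)²`. -/
def SelGroup (a b : ℤ) : Set (ℚˣ ⧸ QSq) :=
  { x | ∃ c : ℚˣ, (c : ℚ) ∈ SelSet a b ∧ (QuotientGroup.mk c : ℚˣ ⧸ QSq) = x }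



section AuxStmt4

set_option maxHeartbeats 1000000

variable {p : ℕ} [Fact p.Prime]

lemma toZMod_eq_zero_iff (x : ℤ_[p]) : PadicInt.toZMod x = 0 ↔ ‖x‖ < 1 := by
  rw [← RingHom.mem_ker, PadicInt.ker_toZMod, IsLocalRing.mem_maximalIdeal,
    mem_nonunits_iff, PadicInt.not_isUnit_iff]

lemma norm_eq_one_of_res (x : ℤ_[p]) (h : PadicInt.toZMod x ≠ 0) : ‖x‖ = 1 := by
  rcases lt_or_eq_of_le x.norm_le_one with h1 | h1
  · exact absurd ((toZMod_eq_zero_iff x).2 h1) h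
  · exact h1

lemma res_lift (r : ZMod p) : PadicInt.toZMod ((r.val : ℕ) : ℤ_[p]) = r := by
  rw [map_natCast, ZMod.natCast_val, ZMod.cast_id]

lemma two_norm_one (hp2 : p ≠ 2) : ‖(2 : ℤ_[p])‖ = 1 := by
  have h : ¬ ((p : ℤ) ∣ (2:ℤ)) := by
    intro h
    have := Int.le_of_dvd (by norm_num) h
    have h2 := (Fact.out : p.Prime).two_le
    omega
  rcases lt_or_eq_of_le (PadicInt.norm_le_one (2 : ℤ_[p])) with h1 | h1
  · rw [show (2 : ℤ_[p]) = ((2:ℤ) : ℤ_[p]) by norm_cast] at h1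
    exact absurd ((PadicInt.norm_int_lt_one_iff_dvd 2).1 h1) h
  · exact h1

/-- Hensel lift of squares: a unit of `ℤ_p` (p odd) whose residue is a square is a square. -/
lemma sq_lift (hp2 : p ≠ 2) (x : ℤ_[p]) (hx : ‖x‖ = 1)
    (h : IsSquare (PadicInt.toZMod x)) : ∃ s : ℤ_[p], s ^ 2 = x := by
  obtain ⟨r, hr⟩ := h
  have hr0 : r ≠ 0 := by
    intro h0
    rw [h0, mul_zero] at hr
    have := (toZMod_eq_zero_iff x).1 hr
    rw [hx] at this; exact lt_irrefl _ this
  set t : ℤ_[p] := ((r.val : ℕ) : ℤ_[p]) with ht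
  have hrest : PadicInt.toZMod t = r := res_lift r
  have htnorm : ‖t‖ = 1 := norm_eq_one_of_res t (by rw [hrest]; exact hr0)
  set F : Polynomial ℤ_[p] := Polynomial.X ^ 2 - Polynomial.C x with hF
  have hFeval : ∀ z : ℤ_[p], F.eval z = z ^ 2 - x := by intro z; simp [hF]
  have hFd : ∀ z : ℤ_[p], F.derivative.eval z = 2 * z := by
    intro z
    simp [hF]
    left; norm_num
  have hlt : ‖F.eval t‖ < ‖F.derivative.eval t‖ ^ 2 := by
    rw [hFeval t, hFd t, norm_mul, two_norm_one hp2, htnorm, one_mul, one_pow]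
    rw [← toZMod_eq_zero_iff]
    rw [map_sub, map_pow, hrest, hr]
    ring
  obtain ⟨z, hz, -⟩ := hensels_lemma hlt
  rw [Polynomial.coe_aeval_eq_eval, hFeval] at hz
  exact ⟨z, by linear_combination hz⟩

lemma nonsq_mul_nonsq (hp2 : p ≠ 2) {x y : ZMod p} (hx : ¬IsSquare x) (hy : ¬IsSquare y) :
    IsSquare (x * y) := by
  have h1 : quadraticChar (ZMod p) x = -1 := quadraticChar_neg_one_iff_not_isSquare.2 hx
  have h2 : quadraticChar (ZMod p) y = -1 := quadraticChar_neg_one_iff_not_isSquare.2 hy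
  have h3 : quadraticChar (ZMod p) (x * y) = 1 := by rw [map_mul, h1, h2]; ring
  have hxy : x * y ≠ 0 := by
    intro h0
    rcases mul_eq_zero.1 h0 with h | h
    · exact hx ⟨0, by rw [h, mul_zero]⟩
    · exact hy ⟨0, by rw [h, mul_zero]⟩
  exact (quadraticChar_one_iff_isSquare hxy).1 h3

lemma zmodTwoNeZero (hp2 : p ≠ 2) : (2 : ZMod p) ≠ 0 := by
  intro h0
  have : ((2:ℕ) : ZMod p) = 0 := by exact_mod_cast h0
  have hd := (ZMod.natCast_eq_zero_iff 2 p).1 this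
  exact hp2 ((Nat.prime_dvd_prime_iff_eq (Fact.out) Nat.prime_two).1 hd)

lemma sum_quadChar_sq_sub (hp2 : p ≠ 2) (e : ZMod p) (he : e ≠ 0) :
    ∑ x : ZMod p, (quadraticChar (ZMod p) (x ^ 2 - e) : ℤ) = -1 := by
  have h2 : (2 : ZMod p) ≠ 0 := zmodTwoNeZero hp2
  have key : Fintype.card {t : ZMod p × ZMod p // t.1 ^ 2 - t.2 ^ 2 = e}
      = Fintype.card (ZMod p)ˣ := by
    symm
    apply Fintype.card_congr
    refine
      { toFun := fun u => ⟨(((u : ZMod p) + e * (u⁻¹ : (ZMod p)ˣ)) / 2,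
          (((u : ZMod p)) - e * (u⁻¹ : (ZMod p)ˣ)) / 2), ?_⟩
        invFun := fun s => if h : (s.1.1 + s.1.2) = 0 then 1 else Units.mk0 _ h
        left_inv := ?_
        right_inv := ?_ }
    · show (((u : ZMod p) + e * (u⁻¹ : (ZMod p)ˣ)) / 2) ^ 2
        - (((u : ZMod p) - e * (u⁻¹ : (ZMod p)ˣ)) / 2) ^ 2 = e
      have hu : (u : ZMod p) * ((u⁻¹ : (ZMod p)ˣ) : ZMod p) = 1 := by
        norm_cast
        simp
      have hmain : ∀ A B : ZMod p, ((A + B)/2)^2 - ((A-B)/2)^2 = A * B := by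
        intro A B
        field_simp
        ring
      rw [hmain]
      rw [show (u:ZMod p) * (e * ((u⁻¹ : (ZMod p)ˣ) : ZMod p))
        = e * ((u:ZMod p) * ((u⁻¹ : (ZMod p)ˣ) : ZMod p)) by ring, hu, mul_one]
    · intro u
      have hsum : ((u : ZMod p) + e * ↑u⁻¹) / 2 + ((u:ZMod p) - e * ↑u⁻¹) / 2 = (u : ZMod p) := by
        field_simp; ring
      simp only [hsum]
      rw [dif_neg (Units.ne_zero u)]
      ext
      simp
    · rintro ⟨⟨x, y⟩, hxy⟩
      simp only at hxy
      have hne : x + y ≠ 0 := by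
        intro h0
        apply he
        rw [← hxy, sq_sub_sq, h0, zero_mul]
      simp only [dif_neg hne]
      have hinv : (((Units.mk0 (x+y) hne)⁻¹ : (ZMod p)ˣ) : ZMod p) = (x + y)⁻¹ := by
        simp
      have hdiff : e * (x + y)⁻¹ = x - y := by
        field_simp
        linear_combination -hxy
      apply Subtype.ext
      apply Prod.ext <;> simp only [hinv, Units.val_mk0, hdiff] <;>
        · field_simp
          ring
  have hcard2 : ∀ a : ZMod p,
      ((Finset.univ.filter (fun y : ZMod p => y ^ 2 = a)).card : ℤ)
        = quadraticChar (ZMod p) a + 1 := by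
    intro a
    have hchar : ringChar (ZMod p) ≠ 2 := by rw [ZMod.ringChar_zmod_n]; exact hp2
    have := quadraticChar_card_sqrts hchar a
    rw [← this]
    congr 1
    rw [Set.toFinset_card]
    exact (Fintype.card_subtype _).symm
  have hsplit : (Fintype.card {t : ZMod p × ZMod p // t.1 ^ 2 - t.2 ^ 2 = e} : ℤ)
      = ∑ x : ZMod p, ((Finset.univ.filter (fun y : ZMod p => y ^ 2 = x ^ 2 - e)).card : ℤ) := by
    rw [Fintype.card_congr (Equiv.subtypeProdEquivSigmaSubtype
      (fun x y : ZMod p => x ^ 2 - y ^ 2 = e))]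
    rw [Fintype.card_sigma]
    push_cast
    congr 1
    funext x
    rw [Fintype.card_subtype]
    have hset : (Finset.univ.filter (fun y : ZMod p => x ^ 2 - y ^ 2 = e))
        = Finset.univ.filter (fun y : ZMod p => y ^ 2 = x ^ 2 - e) := by
      ext y
      simp only [Finset.mem_filter, Finset.mem_univ, true_and]
      constructor
      · intro h; linear_combination -h
      · intro h; linear_combination -h
    rw [hset]
  have hcdu : (Fintype.card (ZMod p)ˣ : ℤ) = (p : ℤ) - 1 := by
    rw [ZMod.card_units_eq_totient, Nat.totient_prime Fact.out]
    have := (Fact.out : p.Prime).two_le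
    push_cast
    omega
  have : ((p:ℤ) - 1) = ∑ x : ZMod p, ((quadraticChar (ZMod p) (x ^ 2 - e) : ℤ) + 1) := by
    rw [← hcdu, ← key, hsplit]
    congr 1
    funext x
    rw [hcard2]
  rw [Finset.sum_add_distrib] at this
  simp only [Finset.sum_const, Finset.card_univ, ZMod.card, nsmul_eq_mul, mul_one] at this
  linarith

lemma exists_nonsquare_point (hp2 : p ≠ 2) (A B : ZMod p) (hB : B ≠ 0)
    (hD0 : A ^ 2 - 4 * B ≠ 0) (hDsq : IsSquare (A ^ 2 - 4 * B)) :
    ∃ x : ZMod p, ¬IsSquare x ∧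
      IsSquare (x * (x ^ 2 - 2 * A * x + (A ^ 2 - 4 * B))) := by
  by_contra hcon
  push_neg at hcon
  set χ := quadraticChar (ZMod p) with hχ
  set D := A ^ 2 - 4 * B with hD
  set S : Finset (ZMod p) := Finset.univ.filter (fun x => ¬ IsSquare x) with hS
  have hzero_sq : IsSquare (0 : ZMod p) := ⟨0, (mul_zero 0).symm⟩
  have hval : ∀ x : ZMod p, χ x = 0 ∨ χ x = 1 ∨ χ x = -1 := by
    intro x
    exact quadraticChar_isQuadratic (ZMod p) x
  -- each nonsquare x gives χ (h x) = 1
  have hhx : ∀ x ∈ S, χ (x ^ 2 - 2 * A * x + D) = 1 := by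
    intro x hx
    have hns : ¬ IsSquare x := (Finset.mem_filter.1 hx).2
    have hf := hcon x hns
    have h1 : χ x = -1 := quadraticChar_neg_one_iff_not_isSquare.2 hns
    have h2 : χ (x * (x ^ 2 - 2 * A * x + D)) = -1 :=
      quadraticChar_neg_one_iff_not_isSquare.2 hf
    rw [map_mul, h1] at h2
    rcases hval (x ^ 2 - 2*A*x + D) with h | h | h
    · rw [h] at h2; norm_num at h2
    · exact h
    · rw [h] at h2; norm_num at h2
  -- the full character sum is -1
  have hT : ∑ x : ZMod p, χ (x ^ 2 - 2 * A * x + D) = -1 := by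
    have h4B : (4 : ZMod p) * B ≠ 0 := by
      apply mul_ne_zero _ hB
      intro h4
      have : (2 : ZMod p) * 2 = 0 := by rw [← h4]; norm_num
      rcases mul_eq_zero.1 this with h | h <;> exact zmodTwoNeZero hp2 h
    have hsum := sum_quadChar_sq_sub hp2 (4 * B) h4B
    rw [← hsum]
    apply Fintype.sum_equiv (Equiv.subRight A)
    intro x
    simp only [Equiv.subRight_apply]
    congr 1
    rw [hD]
    ring
  have hcards : (S.card : ℤ) + (Sᶜ.card : ℤ) = p := by
    have h := Finset.card_add_card_compl S
    simp only [Finset.card_univ, ZMod.card] at h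
    exact_mod_cast congrArg (Nat.cast : ℕ → ℤ) h
  have h0S : (0 : ZMod p) ∈ Sᶜ := by simp [hS, hzero_sq]
  have hpos : 0 < Sᶜ.card := Finset.card_pos.2 ⟨0, h0S⟩
  -- counting: 2 * S.card = p - 1
  have hcard : 2 * (S.card : ℤ) = (p : ℤ) - 1 := by
    have hchar : ringChar (ZMod p) ≠ 2 := by rw [ZMod.ringChar_zmod_n]; exact hp2
    have hsum0 : ∑ x : ZMod p, χ x = 0 := quadraticChar_sum_zero hchar
    have hsplit : ∑ x : ZMod p, χ x = ∑ x ∈ S, χ x + ∑ x ∈ Sᶜ, χ x :=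
      (Finset.sum_add_sum_compl S _).symm
    have hSval : ∑ x ∈ S, χ x = -(S.card : ℤ) := by
      have h1 : ∀ x ∈ S, χ x = -1 := fun x hx =>
        quadraticChar_neg_one_iff_not_isSquare.2 (Finset.mem_filter.1 hx).2
      rw [Finset.sum_congr rfl h1, Finset.sum_const, nsmul_eq_mul, mul_neg_one]
    have hScval : ∑ x ∈ Sᶜ, χ x = (Sᶜ.card : ℤ) - 1 := by
      rw [← Finset.sum_erase_add _ _ h0S]
      have h1 : ∀ x ∈ Sᶜ.erase 0, χ x = 1 := by
        intro x hx
        have hx0 : x ≠ 0 := Finset.ne_of_mem_erase hx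
        have hxsq : IsSquare x := by
          have := Finset.mem_of_mem_erase hx
          simp [hS] at this
          exact this
        exact (quadraticChar_one_iff_isSquare hx0).2 hxsq
      rw [Finset.sum_congr rfl h1, Finset.sum_const, Finset.card_erase_of_mem h0S,
        nsmul_eq_mul, mul_one, MulChar.map_zero, add_zero]
      push_cast [Nat.cast_sub hpos]
      ring
    rw [hsplit, hSval, hScval] at hsum0
    linarith
  -- lower bound for the character sum
  have hTge : ∑ x : ZMod p, χ (x ^ 2 - 2 * A * x + D) ≥ 1 := by
    have hsplit : ∑ x : ZMod p, χ (x ^ 2 - 2 * A * x + D)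
        = ∑ x ∈ S, χ (x ^ 2 - 2*A*x + D) + ∑ x ∈ Sᶜ, χ (x ^ 2 - 2*A*x + D) :=
      (Finset.sum_add_sum_compl S _).symm
    have hSsum : ∑ x ∈ S, χ (x ^ 2 - 2*A*x + D) = (S.card : ℤ) := by
      rw [Finset.sum_congr rfl hhx, Finset.sum_const, nsmul_eq_mul, mul_one]
    have hcompl : ∑ x ∈ Sᶜ, χ (x ^ 2 - 2*A*x + D) ≥ 1 - ((Sᶜ.card : ℤ) - 1) := by
      rw [← Finset.sum_erase_add _ _ h0S]
      have h0term : χ ((0:ZMod p) ^ 2 - 2*A*0 + D) = 1 := by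
        have h00 : (0:ZMod p) ^ 2 - 2*A*0 + D = D := by ring
        rw [h00]
        exact (quadraticChar_one_iff_isSquare hD0).2 hDsq
      rw [h0term]
      have hbnd : ∑ x ∈ Sᶜ.erase 0, χ (x ^ 2 - 2*A*x + D) ≥ -((Sᶜ.card : ℤ) - 1) := by
        calc ∑ x ∈ Sᶜ.erase 0, χ (x ^ 2 - 2*A*x + D)
            ≥ ∑ _x ∈ Sᶜ.erase 0, (-1 : ℤ) := by
              apply Finset.sum_le_sum
              intro i _
              rcases hval (i ^ 2 - 2*A*i + D) with h | h | h <;> rw [h] <;> norm_num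
          _ = -((Sᶜ.card : ℤ) - 1) := by
              rw [Finset.sum_const, Finset.card_erase_of_mem h0S, nsmul_eq_mul, mul_neg_one]
              push_cast [Nat.cast_sub hpos]
              ring
      linarith
    rw [hsplit, hSsum]
    linarith
  rw [hT] at hTge
  linarith

lemma int_norm_one {k : ℤ} (hk : ¬ (p:ℤ) ∣ k) : ‖(k : ℚ_[p])‖ = 1 := by
  rcases lt_or_eq_of_le (Padic.norm_int_le_one (p := p) k) with h | h
  · exact absurd ((Padic.norm_intCast_lt_one_iff (k := k)).1 h) hk
  · exact h

lemma locDescent_fwd (a b : ℤ) (hb : ¬ (p:ℤ) ∣ b)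
    (hD : ¬ (p:ℤ) ∣ (a ^ 2 - 4 * b)) (c : ℚ_[p]) (h : LocDescent a b c) :
    c ≠ 0 ∧ ∃ w : ℚ_[p], w ≠ 0 ∧ ‖c * w ^ 2‖ = 1 := by
  obtain ⟨hc0, hcase⟩ := h
  refine ⟨hc0, ?_⟩
  have hDq : ((a : ℚ_[p]) ^ 2 - 4 * (b : ℚ_[p])) = ((a ^ 2 - 4 * b : ℤ) : ℚ_[p]) := by
    push_cast; ring
  have hDnorm : ‖((a ^ 2 - 4 * b : ℤ) : ℚ_[p])‖ = 1 := int_norm_one hD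
  rcases hcase with ⟨u, hu⟩ | ⟨u, hu0, hcu⟩ | ⟨x, y, u, hx0, hu0, hy, hcu⟩
  · have hu0 : u ≠ 0 := by rintro rfl; rw [hu] at hc0; simp at hc0
    refine ⟨u⁻¹, inv_ne_zero hu0, ?_⟩
    rw [hu]
    rw [show u ^ 2 * (u⁻¹) ^ 2 = (u * u⁻¹) ^ 2 by ring, mul_inv_cancel₀ hu0]
    simp
  · exact ⟨u, hu0, by rw [hcu, hDq, hDnorm]⟩
  · -- point case
    set H : ℚ_[p] := x ^ 2 - 2 * (a : ℚ_[p]) * x + ((a : ℚ_[p]) ^ 2 - 4 * (b : ℚ_[p])) with hH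
    rcases lt_trichotomy ‖x‖ 1 with hlt | heq | hgt
    · -- ‖x‖ < 1
      have hnH : ‖H‖ = 1 := by
        have hsplit : H = x * (x - 2 * (a:ℚ_[p])) + ((a ^ 2 - 4 * b : ℤ) : ℚ_[p]) := by
          rw [hH, ← hDq]; ring
        have hb1 : ‖x - 2 * (a:ℚ_[p])‖ ≤ 1 := by
          have hna := Padic.nonarchimedean x (-(2 * (a:ℚ_[p])))
          rw [← sub_eq_add_neg] at hna
          refine le_trans hna ?_
          rw [max_le_iff, norm_neg]
          refine ⟨hlt.le, ?_⟩
          rw [show (2 * (a:ℚ_[p])) = ((2 * a : ℤ) : ℚ_[p]) by push_cast; ring]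
          exact Padic.norm_int_le_one (p := p) _
        have hsm : ‖x * (x - 2 * (a:ℚ_[p]))‖ < 1 := by
          rw [norm_mul]
          calc ‖x‖ * ‖x - 2 * (a:ℚ_[p])‖ ≤ ‖x‖ * 1 :=
            mul_le_mul_of_nonneg_left hb1 (norm_nonneg _)
          _ < 1 := by rw [mul_one]; exact hlt
        have hsm' : ‖x * (x - 2 * (a:ℚ_[p]))‖ < ‖((a ^ 2 - 4 * b : ℤ) : ℚ_[p])‖ := by
          rw [hDnorm]; exact hsm
        rw [hsplit, Padic.add_eq_max_of_ne (ne_of_lt hsm'), max_eq_right hsm'.le]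
        exact hDnorm
      have hH0 : H ≠ 0 := by intro h0; rw [h0] at hnH; simp at hnH
      have hy0 : y ≠ 0 := by
        intro h0
        apply mul_ne_zero hx0 hH0
        rw [← hy, h0]
        ring
      refine ⟨u * y⁻¹, mul_ne_zero hu0 (inv_ne_zero hy0), ?_⟩
      have e0 : (u * y⁻¹) ^ 2 * y ^ 2 = u ^ 2 := by
        field_simp
      have e1 : c * (u * y⁻¹) ^ 2 * y ^ 2 = x := by
        rw [mul_assoc, e0, hcu]
      have hyn : ‖y‖ ^ 2 = ‖x‖ := by
        have h3 : ‖y ^ 2‖ = ‖x * H‖ := by rw [hy]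
        rw [norm_pow, norm_mul, hnH, mul_one] at h3
        exact h3
      have hxn0 : ‖x‖ ≠ 0 := by simpa using hx0
      have h2 : ‖c * (u * y⁻¹) ^ 2‖ * ‖x‖ = ‖x‖ := by
        rw [← hyn, ← norm_pow, ← norm_mul, e1, ← hyn]
        norm_num
      exact mul_right_cancel₀ hxn0 (h2.trans (one_mul ‖x‖).symm)
    · exact ⟨u, hu0, by rw [hcu]; exact heq⟩
    · -- ‖x‖ > 1
      have hx1 : (1:ℝ) < ‖x‖ := hgt
      have hnH : ‖H‖ = ‖x‖ ^ 2 := by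
        have hsplit : H = x ^ 2 + (((a ^ 2 - 4 * b : ℤ) : ℚ_[p]) - 2 * (a:ℚ_[p]) * x) := by
          rw [hH, ← hDq]; ring
        have hsm : ‖((a ^ 2 - 4 * b : ℤ) : ℚ_[p]) - 2 * (a:ℚ_[p]) * x‖ < ‖x ^ 2‖ := by
          have hna := Padic.nonarchimedean ((a ^ 2 - 4 * b : ℤ) : ℚ_[p]) (-(2 * (a:ℚ_[p]) * x))
          rw [← sub_eq_add_neg] at hna
          refine lt_of_le_of_lt hna ?_
          rw [max_lt_iff, norm_neg, norm_pow]
          constructor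
          · rw [hDnorm]; nlinarith
          · rw [show (2 * (a:ℚ_[p]) * x) = ((2 * a : ℤ) : ℚ_[p]) * x by push_cast; ring,
              norm_mul]
            have h2a := Padic.norm_int_le_one (p := p) (2 * a : ℤ)
            have hxpos : (0:ℝ) < ‖x‖ := by positivity
            nlinarith
        rw [hsplit, Padic.add_eq_max_of_ne (ne_of_gt hsm),
          max_eq_left hsm.le, norm_pow]
      have hH0 : H ≠ 0 := by
        intro h0
        rw [h0] at hnH
        simp only [norm_zero] at hnH
        nlinarith
      have hy0 : y ≠ 0 := by
        intro h0
        apply mul_ne_zero hx0 hH0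
        rw [← hy, h0]
        ring
      have hx20 : (x:ℚ_[p]) ^ 2 ≠ 0 := pow_ne_zero 2 hx0
      refine ⟨u * y * (x ^ 2)⁻¹,
        mul_ne_zero (mul_ne_zero hu0 hy0) (inv_ne_zero hx20), ?_⟩
      have e0 : (u * y * (x ^ 2)⁻¹) ^ 2 * (x ^ 2) ^ 2 = u ^ 2 * y ^ 2 := by
        field_simp
      have e1 : c * (u * y * (x ^ 2)⁻¹) ^ 2 * (x ^ 2) ^ 2 = x * y ^ 2 := by
        rw [mul_assoc, e0, ← mul_assoc, hcu]
      have hyn : ‖y‖ ^ 2 = ‖x‖ ^ 3 := by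
        have h3 : ‖y ^ 2‖ = ‖x * H‖ := by rw [hy]
        rw [norm_pow, norm_mul, hnH] at h3
        rw [h3]; ring
      have hxpos : (0:ℝ) < ‖x‖ := by positivity
      have h4 : (‖x‖:ℝ) ^ 4 ≠ 0 := by positivity
      apply mul_right_cancel₀ h4
      rw [show (‖x‖:ℝ) ^ 4 = ‖(x ^ 2) ^ 2‖ by rw [norm_pow, norm_pow, ← pow_mul],
        ← norm_mul, e1, norm_mul, norm_pow, hyn, one_mul, norm_pow, norm_pow, ← pow_mul]
      ring

lemma unit_norm_ne_zero {x : ℤ_[p]} (hx : ‖x‖ = 1) : (x : ℚ_[p]) ≠ 0 := by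
  intro h0
  rw [(PadicInt.coe_eq_zero (x := x)).1 h0] at hx
  simp at hx

lemma unit_rel (hp2 : p ≠ 2) (x z : ℤ_[p]) (hx : ‖x‖ = 1) (hz : ‖z‖ = 1)
    (h : IsSquare (PadicInt.toZMod x * PadicInt.toZMod z)) :
    ∃ u : ℚ_[p], u ≠ 0 ∧ (x : ℚ_[p]) * u ^ 2 = (z : ℚ_[p]) := by
  have hxz : ‖x * z‖ = 1 := by rw [norm_mul, hx, hz, one_mul]
  obtain ⟨s, hs⟩ := sq_lift hp2 (x * z) hxz (by rw [map_mul]; exact h)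
  have hs1 : ‖s‖ = 1 := by
    have h2 : ‖s‖ ^ 2 = 1 := by rw [← norm_pow, hs, hxz]
    nlinarith [norm_nonneg s]
  have hx0 : (x : ℚ_[p]) ≠ 0 := unit_norm_ne_zero hx
  have hs0 : (s : ℚ_[p]) ≠ 0 := unit_norm_ne_zero hs1
  refine ⟨(s : ℚ_[p]) / (x : ℚ_[p]), div_ne_zero hs0 hx0, ?_⟩
  have hsq : ((s : ℚ_[p])) ^ 2 = (x : ℚ_[p]) * (z : ℚ_[p]) := by
    exact_mod_cast congrArg (fun t : ℤ_[p] => (t : ℚ_[p])) hs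
  field_simp
  linear_combination hsq

/-- The backward direction of the local descent description at a good odd prime. -/
lemma locDescent_bwd (hp2 : p ≠ 2) (a b : ℤ) (hb : ¬ (p:ℤ) ∣ b)
    (hD : ¬ (p:ℤ) ∣ (a ^ 2 - 4 * b)) (c : ℚ_[p]) (hc0 : c ≠ 0)
    (w : ℚ_[p]) (hw0 : w ≠ 0) (hnorm : ‖c * w ^ 2‖ = 1) :
    LocDescent a b c := by
  refine ⟨hc0, ?_⟩
  set ξ : ℚ_[p] := c * w ^ 2 with hξ
  have hξint : ‖ξ‖ ≤ 1 := hnorm.le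
  set z : ℤ_[p] := ⟨ξ, hξint⟩ with hzdef
  have hz1 : ‖z‖ = 1 := by rw [PadicInt.norm_def]; exact hnorm
  have hzc : (z : ℚ_[p]) = c * w ^ 2 := rfl
  set r : ZMod p := PadicInt.toZMod z with hr
  have hr0 : r ≠ 0 := by
    rw [hr, Ne, toZMod_eq_zero_iff, hz1]
    simp
  set Dz : ℤ_[p] := ((a ^ 2 - 4 * b : ℤ) : ℤ_[p]) with hDz
  have hDz1 : ‖Dz‖ = 1 := by
    rcases lt_or_eq_of_le (PadicInt.norm_le_one Dz) with h | h
    · exact absurd ((PadicInt.norm_int_lt_one_iff_dvd _).1 h) hD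
    · exact h
  have hDzres : PadicInt.toZMod Dz = ((a ^ 2 - 4 * b : ℤ) : ZMod p) := map_intCast _ _
  have hDr0 : ((a ^ 2 - 4 * b : ℤ) : ZMod p) ≠ 0 := by
    rw [Ne, ZMod.intCast_zmod_eq_zero_iff_dvd]
    exact hD
  have hDcast : ((Dz : ℚ_[p])) = (a : ℚ_[p]) ^ 2 - 4 * (b : ℚ_[p]) := by
    rw [hDz, PadicInt.coe_intCast]
    push_cast
    ring
  by_cases hsq : IsSquare r
  · -- square case
    left
    obtain ⟨u, hu0, hu⟩ := unit_rel hp2 1 z (by simp) hz1 (by rw [map_one, one_mul]; exact hsq)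
    rw [PadicInt.coe_one, one_mul] at hu
    refine ⟨u / w, ?_⟩
    rw [div_pow, eq_div_iff (pow_ne_zero 2 hw0)]
    exact (hu.trans hzc).symm
  · by_cases hDsq : IsSquare (((a ^ 2 - 4 * b : ℤ) : ZMod p))
    · -- the hard case : find a point with nonsquare x-coordinate
      right; right
      set A : ZMod p := ((a : ℤ) : ZMod p) with hA
      set B : ZMod p := ((b : ℤ) : ZMod p) with hB'
      have hBne : B ≠ 0 := by
        rw [hB', Ne, ZMod.intCast_zmod_eq_zero_iff_dvd]
        exact hb
      have hDrA : ((a ^ 2 - 4 * b : ℤ) : ZMod p) = A ^ 2 - 4 * B := by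
        rw [hA, hB']
        push_cast
        ring
      obtain ⟨x₀, hx₀ns, hx₀sq⟩ := exists_nonsquare_point hp2 A B hBne
        (by rw [← hDrA]; exact hDr0) (by rw [← hDrA]; exact hDsq)
      have hx₀0 : x₀ ≠ 0 := by
        intro h0
        exact hx₀ns (by rw [h0]; exact ⟨0, (mul_zero 0).symm⟩)
      -- produce a p-adic integer point with residue x₀
      have key : ∃ (xz yz : ℤ_[p]), ‖xz‖ = 1 ∧ PadicInt.toZMod xz = x₀ ∧
          yz ^ 2 = xz * (xz ^ 2 - 2 * (a : ℤ_[p]) * xz + ((a : ℤ_[p]) ^ 2 - 4 * (b : ℤ_[p]))) := by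
        set t : ℤ_[p] := ((x₀.val : ℕ) : ℤ_[p]) with ht
        have hrest : PadicInt.toZMod t = x₀ := res_lift x₀
        have ht1 : ‖t‖ = 1 := norm_eq_one_of_res t (by rw [hrest]; exact hx₀0)
        have hares : PadicInt.toZMod ((a : ℤ) : ℤ_[p]) = A := map_intCast _ _
        have hbres : PadicInt.toZMod ((b : ℤ) : ℤ_[p]) = B := map_intCast _ _
        have hfres : PadicInt.toZMod
            (t * (t ^ 2 - 2 * (a : ℤ_[p]) * t + ((a : ℤ_[p]) ^ 2 - 4 * (b : ℤ_[p]))))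
            = x₀ * (x₀ ^ 2 - 2 * A * x₀ + (A ^ 2 - 4 * B)) := by
          simp only [map_mul, map_sub, map_add, map_pow, map_ofNat, hrest, hares, hbres,
            map_intCast]
        by_cases hv : x₀ * (x₀ ^ 2 - 2 * A * x₀ + (A ^ 2 - 4 * B)) = 0
        · -- Hensel root of the quadratic factor
          have hroot : x₀ ^ 2 - 2 * A * x₀ + (A ^ 2 - 4 * B) = 0 := by
            rcases mul_eq_zero.1 hv with h | h
            · exact absurd h hx₀0
            · exact h
          set F : Polynomial ℤ_[p] :=
            Polynomial.X ^ 2 - Polynomial.C (2 * (a : ℤ_[p])) * Polynomial.X + Polynomial.C Dz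
            with hF
          have hFeval : ∀ zz : ℤ_[p], F.eval zz = zz ^ 2 - 2 * (a : ℤ_[p]) * zz + Dz := by
            intro zz; simp [hF]
          have hFd : ∀ zz : ℤ_[p], F.derivative.eval zz = 2 * zz - 2 * (a : ℤ_[p]) := by
            intro zz
            simp [hF]
            left; norm_num
            try ring
          have hDzres2 : PadicInt.toZMod Dz = A ^ 2 - 4 * B := by rw [hDzres, hDrA]
          have hevalres : PadicInt.toZMod (F.eval t) = 0 := by
            rw [hFeval, map_add, map_sub, map_pow, map_mul, map_mul, hrest, hDzres2,
              map_ofNat, hares]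
            exact hroot
          have hderres : PadicInt.toZMod (F.derivative.eval t) = 2 * x₀ - 2 * A := by
            rw [hFd, map_sub, map_mul, map_mul, hrest, map_ofNat, hares]
          have hderne : (2 : ZMod p) * x₀ - 2 * A ≠ 0 := by
            intro h0
            have hxA : x₀ = A := by
              have h2 : (2 : ZMod p) * (x₀ - A) = 0 := by rw [← h0]; ring
              rcases mul_eq_zero.1 h2 with h | h
              · exact absurd h (zmodTwoNeZero hp2)
              · linear_combination h
            apply hBne
            have h4 : (4 : ZMod p) * B = 0 := by
              rw [hxA] at hroot
              linear_combination -hroot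
            have h4ne : (4 : ZMod p) ≠ 0 := by
              intro h40
              have : (2 : ZMod p) * 2 = 0 := by rw [← h40]; norm_num
              rcases mul_eq_zero.1 this with h | h <;> exact zmodTwoNeZero hp2 h
            rcases mul_eq_zero.1 h4 with h | h
            · exact absurd h h4ne
            · exact h
          have hder1 : ‖F.derivative.eval t‖ = 1 :=
            norm_eq_one_of_res _ (by rw [hderres]; exact hderne)
          have hlt : ‖F.eval t‖ < ‖F.derivative.eval t‖ ^ 2 := by
            rw [hder1, one_pow, ← toZMod_eq_zero_iff]
            exact hevalres
          obtain ⟨zr, hzr, hclose, -, -⟩ := hensels_lemma hlt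
          rw [Polynomial.coe_aeval_eq_eval, hder1] at hclose
          have hzres : PadicInt.toZMod zr = x₀ := by
            have : PadicInt.toZMod (zr - t) = 0 := (toZMod_eq_zero_iff _).2 hclose
            rw [map_sub, hrest, sub_eq_zero] at this
            exact this
          have hzeq : zr ^ 2 - 2 * (a : ℤ_[p]) * zr + ((a : ℤ_[p]) ^ 2 - 4 * (b : ℤ_[p])) = 0 := by
            have hDzc : Dz = (a : ℤ_[p]) ^ 2 - 4 * (b : ℤ_[p]) := by
              rw [hDz]; push_cast; ring
            rw [← hDzc]
            rw [Polynomial.coe_aeval_eq_eval, hFeval] at hzr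
            exact hzr
          refine ⟨zr, 0, norm_eq_one_of_res zr (by rw [hzres]; exact hx₀0), hzres, ?_⟩
          rw [hzeq, mul_zero]
          ring
        · -- the cubic value is a nonzero square: use Hensel square lift
          have hfnorm : ‖t * (t ^ 2 - 2 * (a : ℤ_[p]) * t + ((a : ℤ_[p]) ^ 2 - 4 * (b : ℤ_[p])))‖ = 1 :=
            norm_eq_one_of_res _ (by rw [hfres]; exact hv)
          obtain ⟨yz, hyz⟩ := sq_lift hp2 _ hfnorm (by rw [hfres]; exact hx₀sq)
          exact ⟨t, yz, ht1, hrest, hyz⟩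
      obtain ⟨xz, yz, hxz1, hxres, hyz⟩ := key
      -- now build the point over ℚ_p
      have hrel : IsSquare (PadicInt.toZMod z * PadicInt.toZMod xz) := by
        rw [hxres, ← hr]
        exact nonsq_mul_nonsq hp2 hsq hx₀ns
      obtain ⟨u, hu0, hu⟩ := unit_rel hp2 z xz hz1 hxz1 hrel
      refine ⟨(xz : ℚ_[p]), (yz : ℚ_[p]), w * u,
        unit_norm_ne_zero hxz1, mul_ne_zero hw0 hu0, ?_, ?_⟩
      · exact_mod_cast congrArg (fun tt : ℤ_[p] => (tt : ℚ_[p])) hyz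
      · rw [mul_pow, ← mul_assoc, ← hzc, hu]
    · -- middle case
      right; left
      have hrel : IsSquare (PadicInt.toZMod z * PadicInt.toZMod Dz) := by
        rw [hDzres, ← hr]
        exact nonsq_mul_nonsq hp2 hsq hDsq
      obtain ⟨u, hu0, hu⟩ := unit_rel hp2 z Dz hz1 hDz1 hrel
      refine ⟨w * u, mul_ne_zero hw0 hu0, ?_⟩
      rw [mul_pow, ← mul_assoc, ← hzc, hu, hDcast]

/-- Change of variables under the quadratic twist by `-d`, when `-d` is a square. -/
lemma locDescent_twist {K : Type*} [Field K] (a b d : ℤ) (s : K) (hs0 : s ≠ 0)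
    (hs : ((-d : ℤ) : K) = s ^ 2) (c : K) :
    LocDescent (-d * a) (d ^ 2 * b) c ↔ LocDescent a b c := by
  have hdK : (d : K) = -s ^ 2 := by
    push_cast at hs
    linear_combination -hs
  constructor
  · rintro ⟨hc0, hcase⟩
    refine ⟨hc0, ?_⟩
    rcases hcase with ⟨u, hu⟩ | ⟨u, hu0, hcu⟩ | ⟨x, y, u, hx0, hu0, hy, hcu⟩
    · exact Or.inl ⟨u, hu⟩
    · refine Or.inr (Or.inl ⟨u / s ^ 2, div_ne_zero hu0 (pow_ne_zero 2 hs0), ?_⟩)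
      push_cast at hcu ⊢
      rw [hdK] at hcu
      field_simp at hcu ⊢
      linear_combination hcu
    · refine Or.inr (Or.inr ⟨x / s ^ 2, y / s ^ 3, u / s,
        div_ne_zero hx0 (pow_ne_zero 2 hs0), div_ne_zero hu0 hs0, ?_, ?_⟩)
      · push_cast at hy ⊢
        rw [hdK] at hy
        field_simp at hy ⊢
        linear_combination hy
      · push_cast at hcu ⊢
        field_simp at hcu ⊢
        linear_combination hcu
  · rintro ⟨hc0, hcase⟩
    refine ⟨hc0, ?_⟩
    rcases hcase with ⟨u, hu⟩ | ⟨u, hu0, hcu⟩ | ⟨x, y, u, hx0, hu0, hy, hcu⟩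
    · exact Or.inl ⟨u, hu⟩
    · refine Or.inr (Or.inl ⟨u * s ^ 2, mul_ne_zero hu0 (pow_ne_zero 2 hs0), ?_⟩)
      push_cast
      rw [hdK]
      linear_combination s ^ 4 * hcu
    · refine Or.inr (Or.inr ⟨s ^ 2 * x, s ^ 3 * y, s * u,
        mul_ne_zero (pow_ne_zero 2 hs0) hx0, mul_ne_zero hs0 hu0, ?_, ?_⟩)
      · push_cast
        rw [hdK]
        linear_combination s ^ 6 * hy
      · push_cast
        linear_combination s ^ 2 * hcu

lemma neg_d_is_square (d : ℤ) (hdpos : 0 < d) (hdsf : Squarefree d)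
    (hodd : Odd d.natAbs.primeFactors.card) {p : ℕ} [Fact p.Prime]
    (h : ∀ q ∈ d.natAbs.primeFactors, ∃ u : ℚ_[p], u ^ 2 = ((-q : ℤ) : ℚ_[p])) :
    ∃ s : ℚ_[p], s ≠ 0 ∧ ((-d : ℤ) : ℚ_[p]) = s ^ 2 := by
  classical
  set S := d.natAbs.primeFactors with hS
  have hprod : ∏ q ∈ S, (q : ℕ) = d.natAbs :=
    Nat.prod_primeFactors_of_squarefree ((Int.squarefree_natAbs).2 hdsf)
  set g : ℕ → ℚ_[p] := fun q => if hq : q ∈ S then Classical.choose (h q hq) else 1 with hg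
  have hgspec : ∀ q ∈ S, (g q) ^ 2 = ((-q : ℤ) : ℚ_[p]) := by
    intro q hq
    rw [hg]
    simp only [dif_pos hq]
    exact Classical.choose_spec (h q hq)
  set s : ℚ_[p] := ∏ q ∈ S, g q with hs
  have hsq : s ^ 2 = ((-d : ℤ) : ℚ_[p]) := by
    rw [hs, ← Finset.prod_pow, Finset.prod_congr rfl hgspec]
    have h1 : ∏ q ∈ S, ((-q : ℤ) : ℚ_[p]) = (-1) ^ S.card * ∏ q ∈ S, ((q : ℕ) : ℚ_[p]) := by
      rw [← Finset.prod_const, ← Finset.prod_mul_distrib]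
      apply Finset.prod_congr rfl
      intro q hq
      push_cast
      ring
    rw [h1, hodd.neg_one_pow, ← Nat.cast_prod, hprod]
    have hnab : ((d.natAbs : ℕ) : ℚ_[p]) = ((d : ℤ) : ℚ_[p]) := by
      rw [← Int.cast_natCast, Int.natAbs_of_nonneg hdpos.le]
    rw [hnab]
    push_cast
    ring
  have hs0 : s ≠ 0 := by
    intro h0
    rw [h0] at hsq
    have hd0 : ((-d : ℤ) : ℚ_[p]) ≠ 0 := by
      simp only [Ne, Int.cast_eq_zero]
      omega
    exact hd0 (by rw [← hsq]; ring)
  exact ⟨s, hs0, hsq.symm⟩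

end AuxStmt4

theorem stmt4 (a b : ℤ) (hab : b * (a ^ 2 - 4 * b) ≠ 0) (d : ℤ)
    (hd : Admissible a b d) :
    SelSetTrunc (-d * a) (d ^ 2 * b) d = SelSetTrunc a b d := by
  obtain ⟨hdpos, hdsf, hodd, hq⟩ := hd
  have key : ∀ (c : ℚ) (p : ℕ) [Fact p.Prime], ¬ (p:ℤ) ∣ d →
      (LocDescent (-d * a) (d ^ 2 * b) (c : ℚ_[p]) ↔ LocDescent a b (c : ℚ_[p])) := by
    intro c p hFp hpd
    by_cases hcase : (p : ℤ) ∣ 2 * b * (a ^ 2 - 4 * b)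
    · obtain ⟨s, hs0, hs⟩ := neg_d_is_square d hdpos hdsf hodd
        (fun q hqS => (hq q hqS).2.2 p hcase)
      exact locDescent_twist a b d s hs0 hs _
    · have hpint : Prime (p : ℤ) := Nat.prime_iff_prime_int.1 Fact.out
      have hp2 : p ≠ 2 := by
        intro h2
        exact hcase (by rw [h2]; exact ⟨b * (a ^ 2 - 4 * b), by push_cast; ring⟩)
      have hb : ¬ (p:ℤ) ∣ b := by
        rintro ⟨k, hk⟩
        exact hcase ⟨2 * k * (a ^ 2 - 4 * b), by rw [hk]; ring⟩
      have hD : ¬ (p:ℤ) ∣ (a ^ 2 - 4 * b) := by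
        rintro ⟨k, hk⟩
        exact hcase ⟨2 * b * k, by rw [hk]; ring⟩
      have hdvd : ¬ (p:ℤ) ∣ d := hpd
      have hb' : ¬ (p:ℤ) ∣ (d ^ 2 * b) := by
        intro h
        rcases hpint.dvd_mul.1 h with h1 | h1
        · exact hdvd (hpint.dvd_of_dvd_pow h1)
        · exact hb h1
      have hD' : ¬ (p:ℤ) ∣ ((-d * a) ^ 2 - 4 * (d ^ 2 * b)) := by
        intro h
        rw [show (-d * a) ^ 2 - 4 * (d ^ 2 * b) = d ^ 2 * (a ^ 2 - 4 * b) by ring] at h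
        rcases hpint.dvd_mul.1 h with h1 | h1
        · exact hdvd (hpint.dvd_of_dvd_pow h1)
        · exact hD h1
      constructor
      · intro h
        obtain ⟨h0, w, hw0, hwn⟩ := locDescent_fwd (-d * a) (d ^ 2 * b) hb' hD' _ h
        exact locDescent_bwd hp2 a b hb hD _ h0 w hw0 hwn
      · intro h
        obtain ⟨h0, w, hw0, hwn⟩ := locDescent_fwd a b hb hD _ h
        exact locDescent_bwd hp2 (-d * a) (d ^ 2 * b) hb' hD' _ h0 w hw0 hwn
  ext c
  simp only [SelSetTrunc, Set.mem_setOf_eq]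
  constructor
  · rintro ⟨h0, h⟩
    exact ⟨h0, fun p _ hpd => (key c p hpd).1 (h p hpd)⟩
  · rintro ⟨h0, h⟩
    exact ⟨h0, fun p _ hpd => (key c p hpd).2 (h p hpd)⟩
end

section
/- Let d be admissible for (a,b), and let q̃ be a prime with q̃ ≡ 7 (mod 8), q̃ ∤ b·(a² − 4b), and (−q̃ | p) = 1 for every odd prime p dividing b·(a² − 4b). Then every c ∈ Sel^φ_{S_d}(a,b) with c > 0 and λ_q(c) = 0 for all primes q dividing d satisfies γ_{q̃}(c) = 0. -/
open scoped Classical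

lemma val_eq_of_norm_eq {p : ℕ} [hp : Fact p.Prime] {z w : ℚ_[p]} (hz : z ≠ 0) (hw : w ≠ 0)
    (h : ‖z‖ = ‖w‖) : z.valuation = w.valuation := by
  rw [Padic.norm_eq_zpow_neg_valuation hz, Padic.norm_eq_zpow_neg_valuation hw] at h
  have hp0 : (0:ℝ) < p := by exact_mod_cast hp.out.pos
  have hp1 : (p:ℝ) ≠ 1 := by exact_mod_cast hp.out.ne_one
  have := (zpow_right_inj₀ hp0 hp1).mp h
  omega

lemma val_eq_zero_of_norm_one {p : ℕ} [hp : Fact p.Prime] {z : ℚ_[p]} (hz : z ≠ 0)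
    (h : ‖z‖ = 1) : z.valuation = 0 := by
  have := val_eq_of_norm_eq hz (one_ne_zero) (h.trans norm_one.symm)
  simpa using this

lemma locEven (a b : ℤ) (p : ℕ) [hp : Fact p.Prime]
    (hpd : ¬ (p:ℤ) ∣ 2 * b * (a ^ 2 - 4 * b)) (c : ℚ)
    (h : LocDescent a b (c : ℚ_[p])) : Even (padicValRat p c) := by
  obtain ⟨hc0, hcase⟩ := h
  rw [← Padic.valuation_ratCast (p := p)]
  have hpΔ : ¬ (p:ℤ) ∣ (a ^ 2 - 4 * b) := fun hdvd => hpd (hdvd.mul_left _)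
  set D : ℚ_[p] := (a : ℚ_[p]) ^ 2 - 4 * (b : ℚ_[p]) with hDdef
  have hDcast : D = ((a ^ 2 - 4 * b : ℤ) : ℚ_[p]) := by push_cast; ring
  have hDnorm : ‖D‖ = 1 := by
    rw [hDcast]
    refine le_antisymm (Padic.norm_int_le_one _) ?_
    by_contra hlt
    exact hpΔ ((Padic.norm_intCast_lt_one_iff).mp (lt_of_not_ge hlt))
  have hDne : D ≠ 0 := by
    intro h0; rw [h0] at hDnorm; simp at hDnorm
  have hDval : D.valuation = 0 := val_eq_zero_of_norm_one hDne hDnorm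
  have h2a : ‖2 * (a : ℚ_[p])‖ ≤ 1 := by
    have : ((2 * a : ℤ) : ℚ_[p]) = 2 * (a : ℚ_[p]) := by push_cast; ring
    rw [← this]; exact Padic.norm_int_le_one _
  rcases hcase with ⟨u, hu⟩ | ⟨u, hu0, hcu⟩ | ⟨x, y, u, hx0, hu0, hy, hcu⟩
  · -- c = u^2
    have hu0 : u ≠ 0 := by
      rintro rfl
      exact hc0 (by rw [hu]; simp)
    refine ⟨u.valuation, ?_⟩
    rw [hu, sq, Padic.valuation_mul hu0 hu0]
  · -- c u^2 = D
    have hval := congrArg Padic.valuation hcu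
    rw [Padic.valuation_mul hc0 (pow_ne_zero 2 hu0), sq,
      Padic.valuation_mul hu0 hu0, hDval] at hval
    exact ⟨-u.valuation, by omega⟩
  · -- point case
    suffices hx : Even x.valuation by
      have hval := congrArg Padic.valuation hcu
      rw [Padic.valuation_mul hc0 (pow_ne_zero 2 hu0), sq,
        Padic.valuation_mul hu0 hu0] at hval
      obtain ⟨r, hr⟩ := hx
      exact ⟨r - u.valuation, by omega⟩
    set Q : ℚ_[p] := x ^ 2 - 2 * (a : ℚ_[p]) * x + D with hQdef
    have hxn : 0 < ‖x‖ := norm_pos_iff.mpr hx0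
    rcases lt_trichotomy ‖x‖ 1 with hlt | heq | hgt
    · -- ‖x‖ < 1 : ‖Q‖ = 1
      have hsub : ‖x ^ 2 - 2 * (a : ℚ_[p]) * x‖ < 1 := by
        have : x ^ 2 - 2 * (a : ℚ_[p]) * x = x * (x - 2 * (a:ℚ_[p])) := by ring
        rw [this, norm_mul]
        have h1 : ‖x - 2 * (a:ℚ_[p])‖ ≤ 1 := by
          rw [sub_eq_add_neg]
          have := Padic.nonarchimedean x (-(2 * (a:ℚ_[p])))
          rw [norm_neg] at this
          exact le_trans this (max_le hlt.le h2a)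
        have hnn : (0:ℝ) ≤ ‖x‖ := norm_nonneg _
        nlinarith
      have hQnorm : ‖Q‖ = 1 := by
        have hne : ‖x ^ 2 - 2 * (a : ℚ_[p]) * x‖ ≠ ‖D‖ := by rw [hDnorm]; exact hsub.ne
        have hQe : Q = (x ^ 2 - 2 * (a : ℚ_[p]) * x) + D := by rw [hQdef]
        rw [hQe, Padic.add_eq_max_of_ne hne, hDnorm, max_eq_right hsub.le]
      have hQne : Q ≠ 0 := by intro h0; rw [h0] at hQnorm; simp at hQnorm
      have hy0 : y ≠ 0 := by
        intro h0
        rw [h0] at hy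
        exact (mul_ne_zero hx0 hQne) (by simpa using hy.symm)
      have hval := congrArg Padic.valuation hy
      rw [sq, Padic.valuation_mul hy0 hy0,
        Padic.valuation_mul hx0 hQne, val_eq_zero_of_norm_one hQne hQnorm] at hval
      exact ⟨y.valuation, by omega⟩
    · exact ⟨0, by simpa using val_eq_zero_of_norm_one hx0 heq⟩
    · -- 1 < ‖x‖ : ‖Q‖ = ‖x^2‖
      have hx2 : ‖x ^ 2‖ = ‖x‖ * ‖x‖ := by rw [sq, norm_mul]
      have hsub : ‖-(2 * (a : ℚ_[p]) * x) + D‖ < ‖x ^ 2‖ := by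
        have h1 : ‖-(2 * (a : ℚ_[p]) * x) + D‖ ≤ max ‖2 * (a : ℚ_[p]) * x‖ ‖D‖ := by
          have := Padic.nonarchimedean (-(2 * (a : ℚ_[p]) * x)) D
          rwa [norm_neg] at this
        have h2 : ‖2 * (a : ℚ_[p]) * x‖ ≤ ‖x‖ := by
          rw [norm_mul]
          calc ‖2 * (a:ℚ_[p])‖ * ‖x‖ ≤ 1 * ‖x‖ :=
            mul_le_mul_of_nonneg_right h2a (norm_nonneg _)
          _ = ‖x‖ := one_mul _
        have h3 : max ‖2 * (a : ℚ_[p]) * x‖ ‖D‖ ≤ ‖x‖ := max_le h2 (by rw [hDnorm]; exact hgt.le)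
        calc ‖-(2 * (a : ℚ_[p]) * x) + D‖ ≤ ‖x‖ := le_trans h1 h3
          _ < ‖x ^ 2‖ := by rw [hx2]; nlinarith
      have hQnorm : ‖Q‖ = ‖x ^ 2‖ := by
        have : Q = x ^ 2 + (-(2 * (a : ℚ_[p]) * x) + D) := by rw [hQdef]; ring
        have hne : ‖(x^2 : ℚ_[p])‖ ≠ ‖-(2 * (a : ℚ_[p]) * x) + D‖ := (ne_of_lt hsub).symm
        rw [this, Padic.add_eq_max_of_ne hne, max_eq_left hsub.le]
      have hx2ne : (x ^ 2 : ℚ_[p]) ≠ 0 := pow_ne_zero 2 hx0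
      have hQne : Q ≠ 0 := by
        intro h0; rw [h0] at hQnorm; exact hx2ne (by simpa using hQnorm.symm)
      have hQval : Q.valuation = x.valuation + x.valuation := by
        have := val_eq_of_norm_eq hQne hx2ne hQnorm
        rw [this, sq, Padic.valuation_mul hx0 hx0]
      have hy0 : y ≠ 0 := by
        intro h0; rw [h0] at hy
        exact (mul_ne_zero hx0 hQne) (by simpa using hy.symm)
      have hval := congrArg Padic.valuation hy
      rw [sq, Padic.valuation_mul hy0 hy0,
        Padic.valuation_mul hx0 hQne, hQval] at hval
      exact ⟨y.valuation - x.valuation, by omega⟩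

lemma norm_one_of_toZMod_ne_zero {p : ℕ} [hp : Fact p.Prime] (z : ℤ_[p])
    (h : PadicInt.toZMod z ≠ 0) : ‖z‖ = 1 := by
  refine le_antisymm (PadicInt.norm_le_one z) ?_
  by_contra hlt
  apply h
  have hdvd : (p : ℤ_[p]) ∣ z := (PadicInt.norm_lt_one_iff_dvd z).mp (lt_of_not_ge hlt)
  have : z ∈ RingHom.ker (PadicInt.toZMod (p := p)) := by
    rw [PadicInt.ker_toZMod, PadicInt.maximalIdeal_eq_span_p, Ideal.mem_span_singleton]
    exact hdvd
  exact this

lemma padic_sqrt_of_zmod_sq (p : ℕ) [hp : Fact p.Prime] (hp2 : p ≠ 2) (m : ℕ)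
    (hm : ¬ p ∣ m) (hsq : IsSquare ((m : ZMod p))) : ∃ u : ℚ_[p], u ^ 2 = (m : ℚ_[p]) := by
  obtain ⟨s, hs⟩ := hsq
  have hs0 : s ≠ 0 := by
    rintro rfl
    rw [mul_zero] at hs
    exact hm ((ZMod.natCast_eq_zero_iff m p).mp hs)
  set a : ℤ_[p] := (s.val : ℤ_[p]) with ha
  have hta : PadicInt.toZMod a = s := by
    rw [ha]
    rw [map_natCast]
    exact ZMod.natCast_rightInverse s
  set F : Polynomial ℤ_[p] := Polynomial.X ^ 2 - Polynomial.C (m : ℤ_[p]) with hF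
  have hFe : ∀ z : ℤ_[p], F.eval z = z ^ 2 - (m : ℤ_[p]) := by
    intro z; simp [hF]
  have hFd : F.derivative = Polynomial.C 2 * Polynomial.X := by
    simp [hF, Polynomial.derivative_X_pow]; rw [one_add_one_eq_two, map_ofNat]
  have hFde : F.derivative.eval a = 2 * a := by rw [hFd]; simp
  have hnorm2a : ‖F.derivative.eval a‖ = 1 := by
    rw [hFde]
    apply norm_one_of_toZMod_ne_zero
    rw [map_mul, hta, map_ofNat]
    have h2 : (2 : ZMod p) ≠ 0 := by
      have : ((2:ℕ) : ZMod p) ≠ 0 := by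
        rw [Ne, ZMod.natCast_eq_zero_iff]
        exact fun hd => hp2 ((Nat.prime_dvd_prime_iff_eq hp.out Nat.prime_two).mp hd)
      simpa using this
    exact mul_ne_zero h2 hs0
  have hnormFa : ‖F.eval a‖ < 1 := by
    rw [PadicInt.norm_lt_one_iff_dvd, ← Ideal.mem_span_singleton,
      ← PadicInt.maximalIdeal_eq_span_p, ← PadicInt.ker_toZMod, RingHom.mem_ker, hFe,
      map_sub, map_pow, hta, map_natCast]
    rw [hs]; ring
  have hlt : ‖F.eval a‖ < ‖F.derivative.eval a‖ ^ 2 := by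
    rw [hnorm2a]; simpa using hnormFa
  obtain ⟨z, hz, -⟩ := hensels_lemma hlt
  rw [Polynomial.coe_aeval_eq_eval, hFe] at hz
  refine ⟨(z : ℚ_[p]), ?_⟩
  have : z ^ 2 = ((m:ℕ) : ℤ_[p]) := by rwa [sub_eq_zero] at hz
  calc (z : ℚ_[p]) ^ 2 = ((z ^ 2 : ℤ_[p]) : ℚ_[p]) := by push_cast; ring
    _ = (m : ℚ_[p]) := by rw [this]; push_cast; ring

lemma legendre_qt_p (qt : ℕ) [hqt : Fact qt.Prime] (h7 : qt % 8 = 7)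
    (p : ℕ) [hp : Fact p.Prime] (hp2 : p ≠ 2) (hpq : p ≠ qt)
    (hleg : legendreSym p (-(qt : ℤ)) = 1) : legendreSym qt (p : ℤ) = 1 := by
  have hqt2 : qt ≠ 2 := by intro h; rw [h] at h7; omega
  have hqt4 : qt % 4 = 3 := by omega
  have hmul : legendreSym p (-(qt : ℤ)) = legendreSym p (-1) * legendreSym p (qt : ℤ) := by
    rw [← legendreSym.mul]; norm_num
  rw [hmul, legendreSym.at_neg_one hp2] at hleg
  have hpodd : p % 2 = 1 := hp.out.eq_two_or_odd.resolve_left hp2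
  have hp4 : p % 4 = 1 ∨ p % 4 = 3 := by omega
  rcases hp4 with hp4 | hp4
  · rw [ZMod.χ₄_nat_one_mod_four hp4, one_mul] at hleg
    rw [legendreSym.quadratic_reciprocity_one_mod_four hp4 hqt2]
    exact hleg
  · rw [ZMod.χ₄_nat_three_mod_four hp4] at hleg
    rw [legendreSym.quadratic_reciprocity_three_mod_four hp4 hqt4]
    -- hleg : -1 * legendreSym p qt = 1
    have : legendreSym p (qt : ℤ) = -1 := by linarith
    rw [this]; norm_num

lemma legendre_qt_two (qt : ℕ) [hqt : Fact qt.Prime] (h7 : qt % 8 = 7) :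
    legendreSym qt (2 : ℤ) = 1 := by
  have hqt2 : qt ≠ 2 := by intro h; rw [h] at h7; omega
  rw [legendreSym.at_two hqt2, ZMod.χ₈_nat_eq_if_mod_eight]
  have : qt % 2 = 1 := by omega
  rw [if_neg (by omega), if_pos (by omega)]


theorem stmt7 (a b : ℤ) (hab : b * (a ^ 2 - 4 * b) ≠ 0) (d : ℤ)
    (hd : Admissible a b d)
    (qt : ℕ) [Fact qt.Prime] (h7 : qt % 8 = 7) (hnd : ¬ (qt : ℤ) ∣ b * (a ^ 2 - 4 * b))
    (hleg : ∀ (p : ℕ) [Fact p.Prime], p ≠ 2 → (p : ℤ) ∣ b * (a ^ 2 - 4 * b) →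
      legendreSym p (-(qt : ℤ)) = 1) :
    ∀ c ∈ SelSetTrunc a b d, 0 < c →
      (∀ q : ℕ, q.Prime → (q : ℤ) ∣ d → lamF q c = 0) → gamF qt c = 0 := by
  intro c hc hpos hlam
  have hqt2 : qt ≠ 2 := by intro h; rw [h] at h7; omega
  have hc0 : c ≠ 0 := hc.1
  have hdenQ : ((c.den : ℚ)) ≠ 0 := by exact_mod_cast c.den_nz
  -- squarefree decomposition of num*den
  obtain ⟨m, k, hkm, hm⟩ := Nat.sq_mul_squarefree (c.num.natAbs * c.den)
  have hn0 : c.num.natAbs * c.den ≠ 0 :=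
    mul_ne_zero (Int.natAbs_ne_zero.mpr (Rat.num_ne_zero.mpr hc0)) c.den_nz
  have hm0 : m ≠ 0 := by rintro rfl; rw [mul_zero] at hkm; exact hn0 hkm.symm
  have hk0 : k ≠ 0 := by rintro rfl; rw [zero_pow (by norm_num), zero_mul] at hkm; exact hn0 hkm.symm
  set r : ℚ := (k : ℚ) / (c.den : ℚ) with hrdef
  have hr0 : r ≠ 0 := div_ne_zero (by exact_mod_cast hk0) hdenQ
  have hceq : c = (m : ℚ) * r ^ 2 := by
    have hnum : ((c.num.natAbs : ℤ)) = c.num := Int.natAbs_of_nonneg (Rat.num_pos.mpr hpos).le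
    have hnumQ : ((c.num.natAbs : ℚ)) = (c.num : ℚ) := by
      rw [Nat.cast_natAbs, abs_of_pos]
      exact_mod_cast Rat.num_pos.mpr hpos
    have h1 : ((k : ℚ)) ^ 2 * (m : ℚ) = (c.num : ℚ) * (c.den : ℚ) := by
      have h := congrArg (fun t : ℕ => (t : ℚ)) hkm
      push_cast at h
      rw [← hnumQ]; linarith [h]
    have h2 : c * (c.den : ℚ) = (c.num : ℚ) := Rat.mul_den_eq_num c
    rw [hrdef, div_pow]
    field_simp
    nlinarith [h1, h2]
  -- valuation formula
  have hv : ∀ (p : ℕ) [Fact p.Prime],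
      padicValRat p c = (padicValNat p m : ℤ) + 2 * padicValRat p r := by
    intro p _
    rw [hceq, padicValRat.mul (by exact_mod_cast hm0) (pow_ne_zero 2 hr0),
      padicValRat.pow r, padicValRat.of_nat]
    ring
  -- every prime dividing m divides 2b(a²-4b)
  have hdvd : ∀ p : ℕ, p.Prime → p ∣ m → (p : ℤ) ∣ 2 * b * (a ^ 2 - 4 * b) := by
    intro p hp hpm
    haveI : Fact p.Prime := ⟨hp⟩
    have hv1 : padicValNat p m = 1 := by
      have hle : m.factorization p ≤ 1 := hm.natFactorization_le_one p
      have hge : 0 < m.factorization p := hp.factorization_pos_of_dvd hm0 hpm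
      have := Nat.factorization_def m hp
      omega
    have hodd : ¬ Even (padicValRat p c) := by
      rw [hv p, hv1]
      rintro ⟨t, ht⟩
      omega
    by_cases hpd : (p : ℤ) ∣ d
    · exfalso
      have h0 := hlam p hp hpd
      rw [lamF] at h0
      have h2 : (2 : ℤ) ∣ padicValRat p c := by
        exact_mod_cast (ZMod.intCast_zmod_eq_zero_iff_dvd _ 2).mp h0
      obtain ⟨t, ht⟩ := h2
      exact hodd ⟨t, by omega⟩
    · by_contra hnd2
      exact hodd (locEven a b p hnd2 c (hc.2 p hpd))
  -- qt does not divide m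
  have hqtm : ¬ qt ∣ m := by
    intro hdm
    have h2d := hdvd qt (Fact.out) hdm
    have hqtp : Prime (qt : ℤ) := Nat.prime_iff_prime_int.mp Fact.out
    rw [mul_assoc] at h2d
    rcases hqtp.dvd_mul.mp h2d with h | h
    · have : (qt : ℤ) ∣ 2 := h
      have : qt ∣ 2 := by exact_mod_cast this
      have := Nat.le_of_dvd (by norm_num) this
      omega
    · exact hnd h
  -- primes dividing m are squares mod qt
  have hsqp : ∀ p : ℕ, p.Prime → p ∣ m → IsSquare ((p : ZMod qt)) := by
    intro p hp hpm
    haveI : Fact p.Prime := ⟨hp⟩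
    have h2d := hdvd p hp hpm
    have hpq : p ≠ qt := by
      rintro rfl
      exact hqtm hpm
    have hne0 : ((p : ZMod qt)) ≠ 0 := by
      rw [Ne, ZMod.natCast_eq_zero_iff]
      intro hdq
      exact hpq ((Nat.prime_dvd_prime_iff_eq Fact.out hp).mp hdq).symm
    by_cases hp2 : p = 2
    · subst hp2
      have := legendre_qt_two qt h7
      exact (legendreSym.eq_one_iff' qt hne0).mp (by exact_mod_cast this)
    · have hpbd : (p : ℤ) ∣ b * (a ^ 2 - 4 * b) := by
        have hpp : Prime (p : ℤ) := Nat.prime_iff_prime_int.mp hp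
        rw [mul_assoc] at h2d
        rcases hpp.dvd_mul.mp h2d with h | h
        · exfalso
          have hpd2 : p ∣ 2 := by exact_mod_cast h
          exact hp2 ((Nat.prime_dvd_prime_iff_eq hp Nat.prime_two).mp hpd2)
        · exact h
      have hl := hleg p hp2 hpbd
      have := legendre_qt_p qt h7 p hp2 hpq hl
      exact (legendreSym.eq_one_iff' qt hne0).mp (by exact_mod_cast this)
  -- m is a square mod qt
  have hmsq : IsSquare ((m : ZMod qt)) := by
    have hprod : ((m : ZMod qt)) = ∏ p ∈ m.primeFactors, ((p : ZMod qt)) := by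
      conv_lhs => rw [← Nat.prod_primeFactors_of_squarefree hm]
      push_cast
      rfl
    rw [hprod]
    exact Finset.prod_induction _ IsSquare (fun _ _ => IsSquare.mul) IsSquare.one
      (fun p hp => hsqp p (Nat.prime_of_mem_primeFactors hp) (Nat.dvd_of_mem_primeFactors hp))
  obtain ⟨u0, hu0⟩ := padic_sqrt_of_zmod_sq qt hqt2 m hqtm hmsq
  -- conclude
  have hs : padicValRat qt c = 2 * padicValRat qt r := by
    rw [hv qt, padicValNat.eq_zero_of_not_dvd hqtm]
    simp
  set s := padicValRat qt r with hsdef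
  have hq0 : ((qt : ℚ)) ≠ 0 := by exact_mod_cast (Fact.out : qt.Prime).ne_zero
  have hrat : c * (qt : ℚ) ^ (-(padicValRat qt c)) = (m : ℚ) * (r * (qt : ℚ) ^ (-s)) ^ 2 := by
    rw [hs, hceq]
    have hzp : ((qt : ℚ) ^ (-s)) ^ (2 : ℕ) = (qt : ℚ) ^ (-(2 * s)) := by
      rw [← zpow_natCast ((qt : ℚ) ^ (-s)) 2, ← zpow_mul]
      ring_nf
    rw [mul_pow, hzp]
    ring
  have hex : ∃ u : ℚ_[qt], u ^ 2 = ((c * (qt : ℚ) ^ (-(padicValRat qt c)) : ℚ) : ℚ_[qt]) := by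
    refine ⟨u0 * ((r * (qt : ℚ) ^ (-s) : ℚ) : ℚ_[qt]), ?_⟩
    rw [mul_pow, hu0, hrat]
    push_cast
    ring
  rw [gamF, if_pos hex]
end
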